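/- Let u_t, u_{t-1} ∈ ℝ_+^d and let p̂, v ∈ (0,1]^d satisfy 1/p̂_i ≤ d/α and v_i/p̂_i ≤ 1/(1-α) for all i, with α ∈ (0,1). Then Σ_i (u_{i,t} ln(1/p̂_i) - u_{i,t-1} ln(1/v_i)) ≤ D_TV(u_t,u_{t-1}) ln(d/α) + (‖u_t‖_1 - D_TV(u_t,u_{t-1})) ln(1/(1-α)). -/

import Mathlib

open Real Finset

/-- `D_TV(x,y) = Σ_{i : x_i ≥ y_i} (x_i - y_i)`. -/
noncomputable def dtv {d : ℕ} (x y : Fin d → ℝ) : ℝ :=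
  ∑ i ∈ Finset.univ.filter (fun i => y i ≤ x i), (x i - y i)

/-- The key intermediate inequality in the proof of Theorem 2, splitting the
per-round entropy change into a shift term and a stay term. -/
theorem stmt7 (d : ℕ) (α : ℝ) (hα : α ∈ Set.Ioo (0 : ℝ) 1)
    (ut ut' phat v : Fin d → ℝ)
    (hut : ∀ i, 0 ≤ ut i) (hut' : ∀ i, 0 ≤ ut' i)
    (hphat : ∀ i, phat i ∈ Set.Ioc (0 : ℝ) 1) (hv : ∀ i, v i ∈ Set.Ioc (0 : ℝ) 1)
    (h1 : ∀ i, 1 / phat i ≤ d / α) (h2 : ∀ i, v i / phat i ≤ 1 / (1 - α)) :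
    ∑ i, (ut i * Real.log (1 / phat i) - ut' i * Real.log (1 / v i))
      ≤ dtv ut ut' * Real.log (d / α)
        + ((∑ i, ut i) - dtv ut ut') * Real.log (1 / (1 - α)) := by
  obtain ⟨hα0, hα1⟩ := hα
  have h1α : 0 < 1 - α := by linarith
  have hlog1 : 0 ≤ Real.log (1 / (1 - α)) := by
    apply Real.log_nonneg
    rw [le_div_iff₀ h1α]; linarith
  have key : ∀ i, ut i * Real.log (1 / phat i) - ut' i * Real.log (1 / v i)
      ≤ (if ut' i ≤ ut i then
          (ut i - ut' i) * Real.log (d / α) + ut' i * Real.log (1 / (1 - α))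
        else ut i * Real.log (1 / (1 - α))) := by
    intro i
    obtain ⟨hp0, hp1⟩ := hphat i
    obtain ⟨hv0, hv1⟩ := hv i
    have hratio : Real.log (1 / phat i) - Real.log (1 / v i)
        ≤ Real.log (1 / (1 - α)) := by
      have heq : Real.log (1 / phat i) - Real.log (1 / v i)
          = Real.log (v i / phat i) := by
        rw [Real.log_div one_ne_zero (ne_of_gt hp0),
            Real.log_div one_ne_zero (ne_of_gt hv0),
            Real.log_div (ne_of_gt hv0) (ne_of_gt hp0)]
        ring
      rw [heq]
      exact Real.log_le_log (by positivity) (h2 i)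
    have hlogv : 0 ≤ Real.log (1 / v i) := by
      apply Real.log_nonneg
      rw [le_div_iff₀ hv0]; linarith
    split_ifs with h
    · have hlogp : Real.log (1 / phat i) ≤ Real.log (d / α) :=
        Real.log_le_log (by positivity) (h1 i)
      nlinarith [mul_le_mul_of_nonneg_left hlogp (sub_nonneg.2 h),
        mul_le_mul_of_nonneg_left hratio (hut' i)]
    · push_neg at h
      nlinarith [mul_le_mul_of_nonneg_left hratio (hut i),
        mul_nonneg (sub_nonneg.2 h.le) hlogv]
  calc ∑ i, (ut i * Real.log (1 / phat i) - ut' i * Real.log (1 / v i))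
      ≤ ∑ i, (if ut' i ≤ ut i then
          (ut i - ut' i) * Real.log (d / α) + ut' i * Real.log (1 / (1 - α))
        else ut i * Real.log (1 / (1 - α))) :=
        Finset.sum_le_sum fun i _ => key i
    _ = dtv ut ut' * Real.log (d / α)
        + ((∑ i, ut i) - dtv ut ut') * Real.log (1 / (1 - α)) := by
        rw [Finset.sum_ite, dtv]
        have hsplit := Finset.sum_filter_add_sum_filter_not Finset.univ
          (fun i => ut' i ≤ ut i) ut
        have h3 : ∑ i ∈ Finset.univ.filter (fun i => ut' i ≤ ut i), (ut i - ut' i)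
            = (∑ i ∈ Finset.univ.filter (fun i => ut' i ≤ ut i), ut i)
              - ∑ i ∈ Finset.univ.filter (fun i => ut' i ≤ ut i), ut' i :=
          Finset.sum_sub_distrib _ _
        simp only [Finset.sum_add_distrib, ← Finset.sum_mul]
        linear_combination (Real.log (1 / (1 - α))) * hsplit
          + (Real.log (1 / (1 - α))) * h3
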